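/- Let f : Δ → Δ be a holomorphic self-map of the open unit disc such that f(z) = z + o(|z-1|³) as z → 1 in Δ (i.e. (f(z) - z)/|z-1|³ → 0 as z tends to 1 with z ∈ Δ). Then f(z) = z for every z ∈ Δ. -/

import Mathlib

open Metric Filter Complex


local notation "conj'" => (starRingEnd ℂ)

noncomputable def mob (b z : ℂ) : ℂ := (z - b) / (1 - conj' b * z)

lemma mem_ball_iff_abs {z : ℂ} : z ∈ ball (0:ℂ) 1 ↔ ‖z‖ < 1 := by
  rw [mem_ball_zero_iff]

lemma mob_den_ne {b z : ℂ} (hb : ‖b‖ < 1) (hz : ‖z‖ < 1) :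
    1 - conj' b * z ≠ 0 := by
  intro h
  have h1 : (1:ℂ) = conj' b * z := by linear_combination h
  have := congrArg (‖·‖) h1
  simp [map_mul] at this
  nlinarith [norm_nonneg b, norm_nonneg z]

lemma normSq_identity (b z : ℂ) :
    normSq (1 - conj' b * z) - normSq (z - b) = (1 - normSq z) * (1 - normSq b) := by
  simp only [normSq_apply, Complex.sub_re, Complex.sub_im, Complex.mul_re, Complex.mul_im,
    Complex.one_re, Complex.one_im, Complex.conj_re, Complex.conj_im]
  ring

lemma normSq_mob {b z : ℂ} (hb : ‖b‖ < 1) (hz : ‖z‖ < 1) :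
    normSq (mob b z) = 1 - (1 - normSq z) * (1 - normSq b) / normSq (1 - conj' b * z) := by
  have hd := mob_den_ne hb hz
  have hd' : normSq (1 - conj' b * z) ≠ 0 := by simpa [normSq_eq_zero] using hd
  rw [mob, normSq_div, eq_sub_iff_add_eq, ← add_div, ← normSq_identity b z]
  have hd'' : normSq (1 - z * conj' b) ≠ 0 := by rw [mul_comm]; exact hd'
  field_simp
  ring

lemma mob_mem {b z : ℂ} (hb : ‖b‖ < 1) (hz : ‖z‖ < 1) :
    ‖mob b z‖ < 1 := by
  have h1 : normSq (mob b z) < 1 := by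
    rw [normSq_mob hb hz]
    have hz2 : normSq z < 1 := by rw [normSq_eq_norm_sq]; nlinarith [norm_nonneg z]
    have hb2 : normSq b < 1 := by rw [normSq_eq_norm_sq]; nlinarith [norm_nonneg b]
    have h2 : 0 < (1 - normSq z) * (1 - normSq b) := mul_pos (by linarith) (by linarith)
    have hd' : 0 < normSq (1 - conj' b * z) := by
      rw [normSq_pos]; exact mob_den_ne hb hz
    have : 0 < (1 - normSq z) * (1 - normSq b) / normSq (1 - conj' b * z) := div_pos h2 hd'
    linarith
  rw [normSq_eq_norm_sq] at h1
  nlinarith [norm_nonneg (mob b z)]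

lemma mob_self (b : ℂ) : mob b b = 0 := by simp [mob]

lemma mob_zero {b : ℂ} : mob (-b) 0 = b := by simp [mob]

lemma mob_inv {b z : ℂ} (hb : ‖b‖ < 1) (hz : ‖z‖ < 1) :
    mob (-b) (mob b z) = z := by
  have hd := mob_den_ne hb hz
  have hb' : ‖-b‖ < 1 := by simpa using hb
  have hd2 : 1 - conj' (-b) * mob b z ≠ 0 := mob_den_ne hb' (mob_mem hb hz)
  simp only [mob] at hd2 ⊢
  rw [div_eq_iff hd2]
  have hd' : 1 - z * conj' b ≠ 0 := by rw [mul_comm]; exact hd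
  field_simp at hd2 ⊢
  rw [map_neg]
  ring

lemma normSq_lt_one {z : ℂ} (hz : ‖z‖ < 1) : normSq z < 1 := by
  rw [normSq_eq_norm_sq]; nlinarith [norm_nonneg z]

lemma mob_diffOn {b : ℂ} (hb : ‖b‖ < 1) :
    DifferentiableOn ℂ (mob b) (ball (0:ℂ) 1) := by
  apply DifferentiableOn.div
  · exact (differentiable_id.sub_const b).differentiableOn
  · exact ((differentiable_const (1:ℂ)).sub ((differentiable_const (conj' b)).mul
      differentiable_id)).differentiableOn
  · intro z hz
    exact mob_den_ne hb (mem_ball_iff_abs.mp hz)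

lemma mob_mapsTo {b : ℂ} (hb : ‖b‖ < 1) :
    Set.MapsTo (mob b) (ball (0:ℂ) 1) (ball (0:ℂ) 1) := fun z hz =>
  mem_ball_iff_abs.mpr (mob_mem hb (mem_ball_iff_abs.mp hz))

lemma schwarz_pick {f : ℂ → ℂ} (hf : DifferentiableOn ℂ f (ball (0:ℂ) 1))
    (hmap : Set.MapsTo f (ball (0:ℂ) 1) (ball (0:ℂ) 1)) {z w : ℂ}
    (hz : z ∈ ball (0:ℂ) 1) (hw : w ∈ ball (0:ℂ) 1) :
    ‖mob (f w) (f z)‖ ≤ ‖mob w z‖ := by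
  have hza := mem_ball_iff_abs.mp hz
  have hwa := mem_ball_iff_abs.mp hw
  have hfw : ‖f w‖ < 1 := mem_ball_iff_abs.mp (hmap hw)
  have hw' : ‖-w‖ < 1 := by simpa using hwa
  set F : ℂ → ℂ := fun ζ => mob (f w) (f (mob (-w) ζ)) with hF
  have hFd : DifferentiableOn ℂ F (ball (0:ℂ) 1) := by
    apply DifferentiableOn.comp (mob_diffOn hfw)
      (DifferentiableOn.comp hf (mob_diffOn hw') (mob_mapsTo hw'))
    exact (hmap.comp (mob_mapsTo hw'))
  have hFmap : Set.MapsTo F (ball (0:ℂ) 1) (ball (0:ℂ) 1) :=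
    (mob_mapsTo hfw).comp (hmap.comp (mob_mapsTo hw'))
  have hF0 : F 0 = 0 := by
    simp only [hF, mob_zero, mob_self]
  have hmz : mob w z ∈ ball (0:ℂ) 1 := mem_ball_iff_abs.mpr (mob_mem hwa hza)
  have hSch := Complex.dist_le_div_mul_dist_of_mapsTo_ball hFd ((by rwa [hF0] : Set.MapsTo F (ball (0:ℂ) 1) (ball (F 0) 1)).mono_right ball_subset_closedBall) hmz
  rw [hF0] at hSch
  have hFval : F (mob w z) = mob (f w) (f z) := by
    simp only [hF, mob_inv hwa hza]
  rw [hFval] at hSch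
  simpa [Complex.dist_eq] using hSch

lemma julia_ineq_aux {f : ℂ → ℂ} (hf : DifferentiableOn ℂ f (ball (0:ℂ) 1))
    (hmap : Set.MapsTo f (ball (0:ℂ) 1) (ball (0:ℂ) 1)) {z w : ℂ}
    (hz : z ∈ ball (0:ℂ) 1) (hw : w ∈ ball (0:ℂ) 1) :
    (1 - normSq z) * (1 - normSq w) * normSq (1 - conj' (f w) * f z)
      ≤ (1 - normSq (f z)) * (1 - normSq (f w)) * normSq (1 - conj' w * z) := by
  have hza := mem_ball_iff_abs.mp hz
  have hwa := mem_ball_iff_abs.mp hw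
  have hfz : ‖f z‖ < 1 := mem_ball_iff_abs.mp (hmap hz)
  have hfw : ‖f w‖ < 1 := mem_ball_iff_abs.mp (hmap hw)
  have hsp := schwarz_pick hf hmap hz hw
  have hsq : normSq (mob (f w) (f z)) ≤ normSq (mob w z) := by
    rw [normSq_eq_norm_sq, normSq_eq_norm_sq]
    exact pow_le_pow_left₀ (norm_nonneg _) hsp 2
  rw [normSq_mob hfw hfz, normSq_mob hwa hza] at hsq
  have hd1 : 0 < normSq (1 - conj' (f w) * f z) := normSq_pos.mpr (mob_den_ne hfw hfz)
  have hd2 : 0 < normSq (1 - conj' w * z) := normSq_pos.mpr (mob_den_ne hwa hza)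
  have h2 : (1 - normSq z) * (1 - normSq w) / normSq (1 - conj' w * z)
      ≤ (1 - normSq (f z)) * (1 - normSq (f w)) / normSq (1 - conj' (f w) * f z) := by
    linarith
  rw [div_le_div_iff₀ hd2 hd1] at h2
  linarith

lemma radial_neBot : (nhdsWithin (1:ℝ) (Set.Ioo 0 1)).NeBot := by
  rw [← mem_closure_iff_nhdsWithin_neBot, closure_Ioo (by norm_num : (0:ℝ) ≠ 1)]
  simp

lemma radial_tendsto : Tendsto (fun r : ℝ => (r:ℂ)) (nhdsWithin (1:ℝ) (Set.Ioo 0 1))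
    (nhdsWithin 1 (ball (0:ℂ) 1)) := by
  rw [tendsto_nhdsWithin_iff]
  constructor
  · have : Tendsto (fun r : ℝ => (r:ℂ)) (nhds 1) (nhds ((1:ℝ):ℂ)) :=
      Complex.continuous_ofReal.continuousAt.tendsto
    rw [Complex.ofReal_one] at this
    exact this.mono_left nhdsWithin_le_nhds
  · filter_upwards [self_mem_nhdsWithin] with r hr
    rw [mem_ball_iff_abs]
    rcases hr with ⟨h0, h1⟩
    rw [Complex.norm_real, Real.norm_eq_abs, abs_of_pos h0]
    exact h1

lemma tendsto_f_one {f : ℂ → ℂ}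
    (hasym : Tendsto (fun z : ℂ => (f z - z) / (‖z - 1‖ : ℂ) ^ 3)
      (nhdsWithin 1 (ball (0 : ℂ) 1)) (nhds 0)) :
    Tendsto f (nhdsWithin 1 (ball (0:ℂ) 1)) (nhds 1) := by
  have habs : Tendsto (fun z : ℂ => ((‖z - 1‖ : ℂ)) ^ 3)
      (nhdsWithin 1 (ball (0:ℂ) 1)) (nhds 0) := by
    have : ContinuousAt (fun z : ℂ => ((‖z - 1‖ : ℂ)) ^ 3) 1 :=
      ((Complex.continuous_ofReal.comp
        (continuous_norm.comp (continuous_id.sub continuous_const))).pow 3).continuousAt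
    have h := this.tendsto
    simp only [sub_self, norm_zero, Complex.ofReal_zero] at h
    rw [zero_pow (by norm_num)] at h
    exact h.mono_left nhdsWithin_le_nhds
  have hsub : Tendsto (fun z : ℂ => f z - z) (nhdsWithin 1 (ball (0:ℂ) 1)) (nhds 0) := by
    have := hasym.mul habs
    rw [mul_zero] at this
    apply this.congr'
    filter_upwards [self_mem_nhdsWithin] with z hz
    have hz1 : z ≠ 1 := by
      intro h; rw [h, mem_ball_iff_abs] at hz; simp at hz
    have : (‖z - 1‖ : ℂ) ^ 3 ≠ 0 := by
      apply pow_ne_zero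
      rw [ne_eq, Complex.ofReal_eq_zero, norm_eq_zero, sub_eq_zero]
      exact hz1
    exact div_mul_cancel₀ _ this
  have := hsub.add (tendsto_id.mono_left (nhdsWithin_le_nhds : nhdsWithin (1:ℂ) (ball 0 1) ≤ nhds 1))
  rw [zero_add] at this
  exact this.congr (fun z => by simp)

section radial

variable {f : ℂ → ℂ}
  (hasym : Tendsto (fun z : ℂ => (f z - z) / (‖z - 1‖ : ℂ) ^ 3)
      (nhdsWithin 1 (ball (0 : ℂ) 1)) (nhds 0))

local notation "l" => nhdsWithin (1:ℝ) (Set.Ioo 0 1)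

lemma cast_abs_eq {r : ℝ} (hr : r ∈ Set.Ioo (0:ℝ) 1) :
    ((‖(r:ℂ) - 1‖ : ℂ)) = 1 - (r:ℂ) := by
  have : (r:ℂ) - 1 = ((r - 1 : ℝ) : ℂ) := by push_cast; ring
  rw [this, Complex.norm_real, Real.norm_eq_abs, abs_of_neg (by linarith [hr.2] : r - 1 < 0)]
  push_cast; ring

lemma one_sub_cast_ne {r : ℝ} (hr : r ∈ Set.Ioo (0:ℝ) 1) : 1 - (r:ℂ) ≠ 0 := by
  rw [sub_ne_zero]
  intro h
  have : (1:ℝ) = r := by exact_mod_cast h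
  linarith [hr.2]

include hasym in
lemma radial_q : Tendsto (fun r : ℝ => (f r - r) / (1 - (r:ℂ))^3) l (nhds 0) := by
  have := hasym.comp radial_tendsto
  apply this.congr'
  filter_upwards [self_mem_nhdsWithin] with r hr
  simp only [Function.comp_apply, cast_abs_eq hr]

include hasym in
lemma radial_ratio : Tendsto (fun r : ℝ => (1 - f r)/(1 - (r:ℂ))) l (nhds 1) := by
  have h2 : Tendsto (fun r : ℝ => ((f r - r) / (1 - (r:ℂ))^3) * (1 - (r:ℂ))^2) l (nhds 0) := by
    have hc : Tendsto (fun r : ℝ => (1 - (r:ℂ))^2) l (nhds 0) := by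
      have : Tendsto (fun r : ℝ => (1 - (r:ℂ))^2) (nhds 1) (nhds ((1 - ((1:ℝ):ℂ))^2)) :=
        (Continuous.pow (continuous_const.sub Complex.continuous_ofReal) 2).continuousAt
      simp only [Complex.ofReal_one, sub_self] at this
      rw [zero_pow (by norm_num)] at this
      exact this.mono_left nhdsWithin_le_nhds
    have := (radial_q hasym).mul hc
    rwa [zero_mul] at this
  have h3 : Tendsto (fun r : ℝ => 1 - ((f r - r) / (1 - (r:ℂ))^3) * (1 - (r:ℂ))^2) l
      (nhds 1) := by
    have := (tendsto_const_nhds : Tendsto (fun _ : ℝ => (1:ℂ)) l (nhds 1)).sub h2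
    rwa [sub_zero] at this
  apply h3.congr'
  filter_upwards [self_mem_nhdsWithin] with r hr
  have hne := one_sub_cast_ne hr
  field_simp
  ring

end radial

lemma julia {f : ℂ → ℂ} (hf : DifferentiableOn ℂ f (ball (0:ℂ) 1))
    (hmap : Set.MapsTo f (ball (0:ℂ) 1) (ball (0:ℂ) 1))
    (hasym : Tendsto (fun z : ℂ => (f z - z) / (‖z - 1‖ : ℂ) ^ 3)
      (nhdsWithin 1 (ball (0 : ℂ) 1)) (nhds 0)) :
    ∀ z ∈ ball (0:ℂ) 1,
      (1 - normSq z) * normSq (1 - f z) ≤ (1 - normSq (f z)) * normSq (1 - z) := by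
  intro z hz
  haveI := radial_neBot
  set l := nhdsWithin (1:ℝ) (Set.Ioo 0 1)
  have hf1 : Tendsto (fun r : ℝ => f r) l (nhds 1) := (tendsto_f_one hasym).comp radial_tendsto
  have hfabs : Tendsto (fun r : ℝ => ‖f r‖) l (nhds 1) := by
    have := (continuous_norm.tendsto 1).comp hf1
    simpa [Function.comp_def] using this
  set A : ℝ → ℝ := fun r => (1 - normSq z) * (1+r) * normSq (1 - conj' (f r) * f z) with hA
  set B : ℝ → ℝ := fun r => (1 - normSq (f z)) *
      (‖(1 - f r)/(1-(r:ℂ))‖ * (1 + ‖f r‖)) * normSq (1 - (r:ℂ) * z)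
    with hB
  have hfz : ‖f z‖ < 1 := mem_ball_iff_abs.mp (hmap hz)
  have hnsfz : normSq (f z) < 1 := normSq_lt_one hfz
  have hAB : ∀ᶠ r in l, A r ≤ B r := by
    filter_upwards [self_mem_nhdsWithin] with r hr
    have hrball : (r:ℂ) ∈ ball (0:ℂ) 1 := by
      rw [mem_ball_iff_abs, Complex.norm_real, Real.norm_eq_abs, abs_of_pos hr.1]; exact hr.2
    have key := julia_ineq_aux hf hmap hz hrball
    rw [Complex.conj_ofReal] at key
    have hnsr : normSq (r:ℂ) = r * r := Complex.normSq_ofReal r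
    have hfr : ‖f r‖ < 1 := mem_ball_iff_abs.mp (hmap hrball)
    have h1mr : (0:ℝ) < 1 - r := by linarith [hr.2]
    -- bound : 1 - normSq (f r) ≤ (1-r) * (abs((1-f r)/(1-r)) * (1 + abs (f r)))
    have habs1 : ‖1 - f ↑r‖ = ‖(1 - f ↑r)/(1-(r:ℂ))‖ * (1 - r) := by
      rw [norm_div]
      have : ‖1 - (r:ℂ)‖ = 1 - r := by
        have : (1:ℂ) - r = ((1 - r : ℝ) : ℂ) := by push_cast; ring
        rw [this, Complex.norm_real, Real.norm_eq_abs, abs_of_pos h1mr]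
      rw [this, div_mul_cancel₀ _ (ne_of_gt h1mr)]
    have hbound : 1 - normSq (f ↑r) ≤
        (1-r) * (‖(1 - f ↑r)/(1-(r:ℂ))‖ * (1 + ‖f ↑r‖)) := by
      have h2 : 1 - ‖f ↑r‖ ≤ ‖1 - f ↑r‖ := by
        have := norm_sub_norm_le (1:ℂ) (f ↑r)
        simpa using this
      have h3 : normSq (f ↑r) = ‖f ↑r‖ ^ 2 := normSq_eq_norm_sq _
      rw [h3, habs1] at *
      nlinarith [norm_nonneg (f ↑r)]
    -- put together
    have hLHS : (1 - normSq z) * (1 - normSq (r:ℂ)) * normSq (1 - conj' (f ↑r) * f z)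
        = (1-r) * A r := by rw [hnsr, hA]; ring
    have hRHS : (1 - normSq (f z)) * (1 - normSq (f ↑r)) * normSq (1 - (r:ℂ) * z)
        ≤ (1-r) * B r := by
      rw [hB]
      have hnn1 : (0:ℝ) ≤ 1 - normSq (f z) := le_of_lt (by linarith)
      have hnn2 : (0:ℝ) ≤ normSq (1 - (r:ℂ) * z) := normSq_nonneg _
      calc (1 - normSq (f z)) * (1 - normSq (f ↑r)) * normSq (1 - (r:ℂ) * z)
          ≤ (1 - normSq (f z)) *
            ((1-r) * (‖(1 - f ↑r)/(1-(r:ℂ))‖ * (1 + ‖f ↑r‖))) *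
            normSq (1 - (r:ℂ) * z) := by
            apply mul_le_mul_of_nonneg_right _ hnn2
            exact mul_le_mul_of_nonneg_left hbound hnn1
        _ = (1-r) * ((1 - normSq (f z)) *
            (‖(1 - f ↑r)/(1-(r:ℂ))‖ * (1 + ‖f ↑r‖)) *
            normSq (1 - (r:ℂ) * z)) := by ring
    have := key.trans hRHS
    rw [hLHS] at this
    exact le_of_mul_le_mul_left this h1mr
  -- limits
  have hcastC : Tendsto (fun r : ℝ => (r:ℂ)) l (nhds 1) := by
    have : Tendsto (fun r : ℝ => (r:ℂ)) (nhds 1) (nhds ((1:ℝ):ℂ)) :=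
      Complex.continuous_ofReal.continuousAt.tendsto
    rw [Complex.ofReal_one] at this
    exact this.mono_left nhdsWithin_le_nhds
  have hAlim : Tendsto A l (nhds ((1 - normSq z) * 2 * normSq (1 - f z))) := by
    have h1 : Tendsto (fun r : ℝ => normSq (1 - conj' (f ↑r) * f z)) l
        (nhds (normSq (1 - f z))) := by
      have hconj : Tendsto (fun r : ℝ => conj' (f ↑r)) l (nhds 1) := by
        have := ((Complex.continuous_conj.tendsto 1).comp hf1)
        simpa [Function.comp_def] using this
      have := (Complex.continuous_normSq.tendsto (1 - 1 * f z)).comp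
        (tendsto_const_nhds.sub (hconj.mul tendsto_const_nhds))
      simpa [Function.comp_def] using this
    have h2 : Tendsto (fun r : ℝ => (1 - normSq z) * (1 + r)) l (nhds ((1 - normSq z) * 2)) := by
      have : Tendsto (fun r : ℝ => 1 + r) l (nhds 2) := by
        have := (tendsto_const_nhds : Tendsto (fun _ : ℝ => (1:ℝ)) l (nhds 1)).add
          (tendsto_nhdsWithin_of_tendsto_nhds tendsto_id)
        norm_num at this; exact this
      exact tendsto_const_nhds.mul this
    exact h2.mul h1
  have hBlim : Tendsto B l (nhds ((1 - normSq (f z)) * 2 * normSq (1 - z))) := by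
    have h1 : Tendsto (fun r : ℝ => ‖(1 - f ↑r)/(1-(r:ℂ))‖) l (nhds 1) := by
      have := (continuous_norm.tendsto 1).comp (radial_ratio hasym)
      simpa only [Function.comp_def, norm_one] using this
    have h2 : Tendsto (fun r : ℝ => 1 + ‖f ↑r‖) l (nhds 2) := by
      have := (tendsto_const_nhds : Tendsto (fun _ : ℝ => (1:ℝ)) l (nhds 1)).add hfabs
      norm_num at this; exact this
    have h3 : Tendsto (fun r : ℝ => normSq (1 - (r:ℂ) * z)) l (nhds (normSq (1 - z))) := by
      have := (Complex.continuous_normSq.tendsto (1 - 1 * z)).comp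
        (tendsto_const_nhds.sub (hcastC.mul tendsto_const_nhds))
      simpa [Function.comp_def] using this
    have := ((tendsto_const_nhds : Tendsto (fun _ : ℝ => (1 - normSq (f z))) l
      (nhds (1 - normSq (f z)))).mul (h1.mul h2)).mul h3
    have heq : (1 - normSq (f z)) * (1 * 2) * normSq (1 - z)
        = (1 - normSq (f z)) * 2 * normSq (1 - z) := by ring
    rwa [heq] at this
  have := le_of_tendsto_of_tendsto hAlim hBlim hAB
  linarith

lemma re_cayley (w : ℂ) : ((1+w)/(1-w)).re = (1 - normSq w)/normSq (1-w) := by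
  rw [Complex.div_re, ← add_div]
  congr 1
  simp only [normSq_apply, Complex.add_re, Complex.add_im, Complex.sub_re, Complex.sub_im,
    Complex.one_re, Complex.one_im]
  ring

lemma phi_identity (a u : ℂ) (t : ℝ) :
    normSq (u + conj' a + 2*(t:ℂ)) - normSq (u - a) = 4 * (a.re + t) * (u.re + t) := by
  rw [show (2:ℂ)*(t:ℂ) = ((2*t : ℝ):ℂ) by push_cast; ring]
  simp only [normSq_apply, Complex.add_re, Complex.add_im, Complex.sub_re, Complex.sub_im,
    Complex.conj_re, Complex.conj_im, Complex.ofReal_re, Complex.ofReal_im]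
  ring

set_option maxHeartbeats 1000000 in
/-- Proposition 3.1 (one-dimensional Burns–Krantz): a holomorphic self-map `f` of the
unit disc with `f z = z + o(|z-1|^3)` as `z → 1` in the disc is the identity. -/
theorem burns_krantz_disc (f : ℂ → ℂ)
    (hf : DifferentiableOn ℂ f (ball (0 : ℂ) 1))
    (hmap : Set.MapsTo f (ball (0 : ℂ) 1) (ball (0 : ℂ) 1))
    (hasym : Tendsto (fun z : ℂ => (f z - z) / (‖z - 1‖ : ℂ) ^ 3)
      (nhdsWithin 1 (ball (0 : ℂ) 1)) (nhds 0)) :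
    ∀ z ∈ ball (0 : ℂ) 1, f z = z := by
  haveI := radial_neBot
  set l := nhdsWithin (1:ℝ) (Set.Ioo 0 1) with hl
  have hne1 : ∀ w ∈ ball (0:ℂ) 1, 1 - w ≠ 0 := by
    intro w hw
    rw [sub_ne_zero]
    intro h
    rw [← h, mem_ball_iff_abs] at hw
    simp at hw
  have hnef : ∀ w ∈ ball (0:ℂ) 1, 1 - f w ≠ 0 := fun w hw => hne1 (f w) (hmap hw)
  set g : ℂ → ℂ := fun w => (1 + f w)/(1 - f w) - (1+w)/(1-w) with hg
  have hgd : DifferentiableOn ℂ g (ball (0:ℂ) 1) := by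
    apply DifferentiableOn.sub
    · exact DifferentiableOn.div ((differentiableOn_const 1).add hf)
        ((differentiableOn_const 1).sub hf) hnef
    · exact DifferentiableOn.div ((differentiableOn_const 1).add differentiableOn_id)
        ((differentiableOn_const 1).sub differentiableOn_id) hne1
  have hgre : ∀ w ∈ ball (0:ℂ) 1, 0 ≤ (g w).re := by
    intro w hw
    have hj := julia hf hmap hasym w hw
    have hd1 : 0 < normSq (1 - f w) := normSq_pos.mpr (hnef w hw)
    have hd2 : 0 < normSq (1 - w) := normSq_pos.mpr (hne1 w hw)
    have : (1 - normSq w)/normSq (1-w) ≤ (1 - normSq (f w))/normSq (1 - f w) := by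
      rw [div_le_div_iff₀ hd2 hd1]
      linarith
    have hre : (g w).re = (1 - normSq (f w))/normSq (1 - f w) - (1 - normSq w)/normSq (1-w) := by
      simp only [hg, Complex.sub_re, re_cayley]
    linarith [hre ▸ sub_nonneg.mpr this]
  -- radial limits of g
  have hmemr : ∀ᶠ r : ℝ in l, (r:ℂ) ∈ ball (0:ℂ) 1 := by
    filter_upwards [self_mem_nhdsWithin] with r hr
    rw [mem_ball_iff_abs, Complex.norm_real, Real.norm_eq_abs, abs_of_pos hr.1]
    exact hr.2
  have hgdiv : Tendsto (fun r : ℝ => g r / (1 - (r:ℂ))) l (nhds 0) := by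
    have hinv : Tendsto (fun r : ℝ => (1 - (r:ℂ))/(1 - f r)) l (nhds 1) := by
      have := (radial_ratio hasym).inv₀ one_ne_zero
      rw [inv_one] at this
      apply this.congr
      intro r
      rw [inv_div]
    have hprod := ((radial_q hasym).mul hinv).const_mul (2:ℂ)
    rw [zero_mul, mul_zero] at hprod
    apply hprod.congr'
    filter_upwards [self_mem_nhdsWithin, hmemr] with r hr hrb
    have h1 : (1:ℂ) - r ≠ 0 := one_sub_cast_ne hr
    have h2 : 1 - f r ≠ 0 := hnef _ hrb
    simp only [hg]
    field_simp
    ring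
  have hg0 : Tendsto (fun r : ℝ => g r) l (nhds 0) := by
    have hsub : Tendsto (fun r : ℝ => 1 - (r:ℂ)) l (nhds 0) := by
      have : Tendsto (fun r : ℝ => 1 - (r:ℂ)) (nhds 1) (nhds (1 - ((1:ℝ):ℂ))) :=
        (continuous_const.sub Complex.continuous_ofReal).continuousAt
      simp only [Complex.ofReal_one, sub_self] at this
      exact this.mono_left nhdsWithin_le_nhds
    have := hgdiv.mul hsub
    rw [zero_mul] at this
    apply this.congr'
    filter_upwards [self_mem_nhdsWithin] with r hr
    exact div_mul_cancel₀ _ (one_sub_cast_ne hr)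
  have h0mem : (0:ℂ) ∈ ball (0:ℂ) 1 := mem_ball_self one_pos
  set a := g 0 with ha
  have hare : 0 ≤ a.re := hgre 0 h0mem
  -- Step 1 : a.re = 0
  have hare0 : a.re = 0 := by
    by_contra hcon
    have hapos : 0 < a.re := lt_of_le_of_ne hare (Ne.symm hcon)
    set Q : ℝ → ℝ := fun r => ‖g r / (1 - (r:ℂ))‖ with hQ
    have hQ0 : Tendsto Q l (nhds 0) := by
      have := (continuous_norm.tendsto 0).comp hgdiv
      simpa only [Function.comp_def, norm_zero] using this
    have hev : ∀ᶠ r : ℝ in l, (1+r) * a.re^2 ≤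
        4 * (a.re + (1-r)^2) * (Q r + (1-r)) := by
      filter_upwards [self_mem_nhdsWithin, hmemr] with r hr hrb
      set t : ℝ := (1-r)^2 with hT
      have h1mr : (0:ℝ) < 1 - r := by linarith [hr.2]
      have ht : 0 < t := by positivity
      -- the auxiliary map
      set den : ℂ → ℂ := fun w => g w + conj' a + 2*(t:ℂ) with hden
      have hdenre : ∀ w, (den w).re = (g w).re + a.re + 2*t := by
        intro w
        simp [hden, Complex.add_re, Complex.conj_re]
      have hdenrepos : ∀ w ∈ ball (0:ℂ) 1, 0 < (den w).re := by
        intro w hw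
        rw [hdenre w]
        have := hgre w hw
        linarith
      have hdenne : ∀ w ∈ ball (0:ℂ) 1, den w ≠ 0 := by
        intro w hw h0
        have := hdenrepos w hw
        rw [h0] at this
        simp at this
      have hid : ∀ w, normSq (den w) - normSq (g w - a) = 4*(a.re + t)*((g w).re + t) :=
        fun w => phi_identity a (g w) t
      set φ : ℂ → ℂ := fun w => (g w - a) / den w with hφ
      have hφd : DifferentiableOn ℂ φ (ball (0:ℂ) 1) :=
        DifferentiableOn.div (hgd.sub_const a)
          ((hgd.add_const _).add_const _) hdenne
      have hφmap : Set.MapsTo φ (ball (0:ℂ) 1) (ball (0:ℂ) 1) := by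
        intro w hw
        rw [mem_ball_iff_abs]
        have hlt : normSq (g w - a) < normSq (den w) := by
          have h4 : 0 < 4*(a.re + t)*((g w).re + t) := by
            have := hgre w hw
            positivity
          linarith [hid w]
        have h1 : normSq (φ w) < 1 := by
          rw [hφ]
          simp only
          rw [normSq_div]
          rw [div_lt_one (normSq_pos.mpr (hdenne w hw))]
          exact hlt
        rw [normSq_eq_norm_sq] at h1
        nlinarith [norm_nonneg (φ w)]
      have hφ0 : φ 0 = 0 := by
        simp [hφ, ha]
      have hSch := Complex.dist_le_div_mul_dist_of_mapsTo_ball hφd ((by rwa [hφ0] : Set.MapsTo φ (ball (0:ℂ) 1) (ball (φ 0) 1)).mono_right ball_subset_closedBall) hrb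
      rw [hφ0] at hSch
      have habsφ : ‖φ r‖ ≤ r := by
        have : dist ((r:ℂ)) 0 = r := by
          rw [Complex.dist_eq, sub_zero, Complex.norm_real, Real.norm_eq_abs, abs_of_pos hr.1]
        rw [Complex.dist_eq, sub_zero, this] at hSch
        simpa using hSch
      have hnsφ : normSq (φ r) ≤ r^2 := by
        rw [normSq_eq_norm_sq]
        exact pow_le_pow_left₀ (norm_nonneg _) habsφ 2
      have hnsden : 0 < normSq (den r) := normSq_pos.mpr (hdenne _ hrb)
      have hkey : (1 - r^2) * normSq (den r) ≤ 4*(a.re + t)*((g r).re + t) := by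
        have h5 : normSq (φ r) = normSq (g r - a) / normSq (den r) := by
          rw [hφ]; simp only; rw [normSq_div]
        have h6 : normSq (g r - a) ≤ r^2 * normSq (den r) := by
          rw [h5, div_le_iff₀ hnsden] at hnsφ
          exact hnsφ
        nlinarith [hid (r:ℂ)]
      have hden_ge : a.re^2 ≤ normSq (den r) := by
        have h7 : a.re ≤ (den (r:ℂ)).re := by
          rw [hdenre]
          have := hgre _ hrb
          linarith
        have h8 : (den (r:ℂ)).re^2 ≤ normSq (den r) := by
          rw [normSq_apply]; nlinarith [sq_nonneg (den (r:ℂ)).im]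
        nlinarith [hapos]
      have hgrle : (g r).re ≤ Q r * (1-r) := by
        have h9 : (g ↑r).re ≤ ‖g ↑r‖ := Complex.re_le_norm _
        have h10 : ‖g ↑r‖ = Q r * (1-r) := by
          rw [hQ]
          simp only
          rw [norm_div]
          have : ‖1 - (r:ℂ)‖ = 1 - r := by
            have h11 : (1:ℂ) - r = ((1 - r : ℝ) : ℂ) := by push_cast; ring
            rw [h11, Complex.norm_real, Real.norm_eq_abs, abs_of_pos h1mr]
          rw [this, div_mul_cancel₀ _ (ne_of_gt h1mr)]
        linarith
      -- combine
      have hr2 : (0:ℝ) ≤ 1 - r^2 := by nlinarith [hr.1, hr.2]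
      have h12 : (1 - r^2) * a.re^2 ≤ (1 - r^2) * normSq (den r) :=
        mul_le_mul_of_nonneg_left hden_ge hr2
      have h13' : (g ↑r).re + t ≤ (1-r) * (Q r + (1-r)) := by
        rw [hT]; nlinarith [hgrle]
      have hat : (0:ℝ) ≤ 4 * (a.re + t) := by linarith
      have h13 : 4*(a.re + t)*((g ↑r).re + t) ≤ 4*(a.re+t)*((1-r) * (Q r + (1-r))) :=
        mul_le_mul_of_nonneg_left h13' hat
      have h13e : 4*(a.re+t)*((1-r) * (Q r + (1-r))) = (1-r) * (4 * (a.re + t) * (Q r + (1-r))) := by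
        ring
      have hmain : (1-r) * ((1+r) * a.re^2) ≤ (1-r) * (4 * (a.re + t) * (Q r + (1-r))) := by
        have e1 : (1-r) * ((1+r) * a.re^2) = (1 - r^2) * a.re^2 := by ring
        rw [e1, ← h13e]
        linarith [hkey, h12, h13]
      have hfin := le_of_mul_le_mul_left hmain h1mr
      rw [hT] at hfin
      exact hfin
    -- limits
    have hlim1 : Tendsto (fun r : ℝ => (1+r) * a.re^2) l (nhds (2 * a.re^2)) := by
      have h15 : Tendsto (fun r : ℝ => 1 + r) l (nhds 2) := by
        have := (tendsto_const_nhds : Tendsto (fun _:ℝ => (1:ℝ)) l (nhds 1)).add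
          (tendsto_nhdsWithin_of_tendsto_nhds tendsto_id)
        norm_num at this
        exact this
      exact h15.mul_const _
    have hlim2 : Tendsto (fun r : ℝ => 4 * (a.re + (1-r)^2) * (Q r + (1-r))) l (nhds 0) := by
      have h1mr0 : Tendsto (fun r : ℝ => 1 - r) l (nhds 0) := by
        have := (tendsto_const_nhds : Tendsto (fun _:ℝ => (1:ℝ)) l (nhds 1)).sub
          (tendsto_nhdsWithin_of_tendsto_nhds tendsto_id)
        norm_num at this
        exact this
      have h16 : Tendsto (fun r : ℝ => 4 * (a.re + (1-r)^2)) l (nhds (4 * a.re)) := by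
        have := ((tendsto_const_nhds : Tendsto (fun _:ℝ => a.re) l (nhds a.re)).add
          (h1mr0.pow 2)).const_mul (4:ℝ)
        norm_num at this
        exact this
      have h17 : Tendsto (fun r : ℝ => Q r + (1-r)) l (nhds 0) := by
        have := hQ0.add h1mr0
        norm_num at this
        exact this
      have := h16.mul h17
      rwa [mul_zero] at this
    have hfinal := le_of_tendsto_of_tendsto hlim1 hlim2 hev
    nlinarith [hfinal, hapos]
  -- Step 2 : g is constant via maximum modulus
  have hgconst : ∀ w ∈ ball (0:ℂ) 1, g w = a := by
    set h : ℂ → ℂ := fun w => Complex.exp (-(g w)) with hh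
    have hhd : DifferentiableOn ℂ h (ball (0:ℂ) 1) := hgd.neg.cexp
    have hmax : IsMaxOn (norm ∘ h) (ball (0:ℂ) 1) 0 := by
      intro w hw
      simp only [Function.comp_apply, hh, Complex.norm_exp,
        Complex.neg_re, ← ha]
      rw [hare0, neg_zero, Real.exp_zero]
      calc Real.exp (-(g w).re) ≤ Real.exp 0 :=
            Real.exp_le_exp.mpr (neg_nonpos.mpr (hgre w hw))
        _ = 1 := Real.exp_zero
    have heqOn := Complex.eqOn_of_isPreconnected_of_isMaxOn_norm
      (convex_ball (0:ℂ) 1).isPreconnected isOpen_ball hhd h0mem hmax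
    -- deduce deriv g = 0 on the ball
    have hderiv0 : ∀ w ∈ ball (0:ℂ) 1, fderivWithin ℂ g (ball (0:ℂ) 1) w = 0 := by
      intro w hw
      have hga : HasDerivAt g (deriv g w) w :=
        (hgd.differentiableAt (isOpen_ball.mem_nhds hw)).hasDerivAt
      have hexp : HasDerivAt h (Complex.exp (-(g w)) * -(deriv g w)) w := hga.neg.cexp
      have hconst : h =ᶠ[nhds w] fun _ => h 0 := by
        filter_upwards [isOpen_ball.mem_nhds hw] with x hx
        exact heqOn hx
      have hzero : HasDerivAt h 0 w :=
        (hasDerivAt_const w (h 0)).congr_of_eventuallyEq hconst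
      have huniq := hexp.unique hzero
      have hder : deriv g w = 0 := by
        rcases mul_eq_zero.mp huniq with h' | h'
        · exact absurd h' (Complex.exp_ne_zero _)
        · simpa using h'
      have hga0 : HasDerivAt g 0 w := hder ▸ hga
      have := hga0.hasFDerivAt
      have hsm : ContinuousLinearMap.toSpanSingleton ℂ (0:ℂ) = 0 := by
        ext; simp
      rw [hsm] at this
      exact this.hasFDerivWithinAt.fderivWithin (isOpen_ball.uniqueDiffWithinAt hw)
    intro w hw
    exact (convex_ball (0:ℂ) 1).is_const_of_fderivWithin_eq_zero hgd hderiv0 hw h0mem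
  -- Step 3 : a = 0
  have ha0 : a = 0 := by
    have hconst : Tendsto (fun r : ℝ => g r) l (nhds a) := by
      have : ∀ᶠ r : ℝ in l, g r = a := by
        filter_upwards [hmemr] with r hr
        exact hgconst _ hr
      exact Tendsto.congr' (Filter.EventuallyEq.symm this) tendsto_const_nhds
    exact tendsto_nhds_unique hconst hg0
  -- Step 4 : conclude
  intro z hz
  have hgz : g z = 0 := (hgconst z hz).trans ha0
  have hcross : (1 + f z) * (1 - z) = (1 + z) * (1 - f z) := by
    have h1 : (1 + f z)/(1 - f z) = (1+z)/(1-z) := by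
      have := sub_eq_zero.mp hgz
      exact this
    rw [div_eq_div_iff (hnef z hz) (hne1 z hz)] at h1
    exact h1
  linear_combination hcross / 2
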